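/- arXiv:2002.08359 — 3 statements merged into one kernel-verified Lean document; each statement's English description precedes it below -/
import Mathlib

section
/- If P is a separable Banach space and 2 ≤ κ ≤ 2^ℵ₀ is a cardinal, then there exist a Bernstein set B ⊆ P and a set T ⊆ P of cardinality κ such that {t + B : t ∈ T} is a partition of P. -/
/-- A Cantor set in a topological space: nonempty, compact, totally disconnected, perfect. -/
def IsCantorSet {P : Type*} [TopologicalSpace P] (C : Set P) : Prop :=
  C.Nonempty ∧ IsCompact C ∧ IsTotallyDisconnected C ∧ Perfect C

/-- A Bernstein set: no Cantor set is contained in it or in its complement. -/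
def IsBernstein {P : Type*} [TopologicalSpace P] (B : Set P) : Prop :=
  ∀ C : Set P, IsCantorSet C → ¬C ⊆ B ∧ ¬C ⊆ Bᶜ

open Cardinal Set Submodule Function

universe u

namespace BernsteinAux

/-- A second countable T1 space has at most continuum many points. -/
lemma mk_le_continuum_of_t1 (P : Type u) [TopologicalSpace P] [T1Space P]
    [SecondCountableTopology P] : #P ≤ Cardinal.continuum := by
  obtain ⟨b, hbc, -, hb⟩ := TopologicalSpace.exists_countable_basis P
  haveI : Countable b := hbc.to_subtype
  have hinj : Injective (fun x : P => {s : b | x ∈ (s : Set P)}) := by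
    intro x z hxz
    by_contra hne
    obtain ⟨U, hU, hxU, hzU⟩ := t1Space_iff_exists_open.1 ‹_› hne
    obtain ⟨v, hvb, hxv, hvU⟩ := hb.exists_subset_of_mem_open hxU hU
    have : (⟨v, hvb⟩ : b) ∈ {s : b | z ∈ (s : Set P)} := by
      have := congrFun (congrArg Membership.mem hxz) (⟨v, hvb⟩ : b)
      exact (Set.ext_iff.1 hxz ⟨v, hvb⟩).1 hxv
    exact hzU (hvU this)
  calc #P ≤ #(Set b) := mk_le_of_injective hinj
    _ = 2 ^ #b := mk_set
    _ ≤ 2 ^ (ℵ₀ : Cardinal.{u}) := power_le_power_left two_ne_zero mk_le_aleph0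
    _ = Cardinal.continuum := two_power_aleph0

/-- A second countable space has at most continuum many closed sets. -/
lemma mk_closeds_le_continuum (P : Type u) [TopologicalSpace P]
    [SecondCountableTopology P] : #{C : Set P // IsClosed C} ≤ Cardinal.continuum := by
  obtain ⟨b, hbc, -, hb⟩ := TopologicalSpace.exists_countable_basis P
  haveI : Countable b := hbc.to_subtype
  have hinj : Injective
      (fun C : {C : Set P // IsClosed C} => {s : b | (s : Set P) ⊆ (C : Set P)ᶜ}) := by
    intro C D h
    have key : {s : Set P | s ∈ b ∧ s ⊆ (C : Set P)ᶜ} = {s : Set P | s ∈ b ∧ s ⊆ (D : Set P)ᶜ} := by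
      ext s
      constructor
      · rintro ⟨hsb, hs⟩
        exact ⟨hsb, Set.ext_iff.1 h ⟨s, hsb⟩ |>.1 hs⟩
      · rintro ⟨hsb, hs⟩
        exact ⟨hsb, Set.ext_iff.1 h ⟨s, hsb⟩ |>.2 hs⟩
    have hC := hb.open_eq_sUnion' C.2.isOpen_compl
    have hD := hb.open_eq_sUnion' D.2.isOpen_compl
    apply Subtype.ext
    rw [← compl_compl (C : Set P), ← compl_compl (D : Set P), hC, hD]
    rw [show {s | s ∈ b ∧ s ⊆ (C : Set P)ᶜ} = {s | s ∈ b ∧ s ⊆ (D : Set P)ᶜ} from key]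
  calc #{C : Set P // IsClosed C} ≤ #(Set b) := mk_le_of_injective hinj
    _ = 2 ^ #b := mk_set
    _ ≤ 2 ^ (ℵ₀ : Cardinal.{u}) := power_le_power_left two_ne_zero mk_le_aleph0
    _ = Cardinal.continuum := two_power_aleph0

/-- A Cantor set has at least continuum many points. -/
lemma continuum_le_mk_of_isCantorSet {P : Type u} [MetricSpace P] [CompleteSpace P]
    {C : Set P} (h : IsCantorSet C) : Cardinal.continuum ≤ #C := by
  obtain ⟨f, hr, -, hinj⟩ := h.2.2.2.exists_nat_bool_injection h.1
  have hle : Cardinal.lift.{u} #(ℕ → Bool) ≤ Cardinal.lift.{0} #C :=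
    lift_mk_le'.2 ⟨⟨fun a => ⟨f a, hr ⟨a, rfl⟩⟩,
      fun a b hab => hinj (congrArg Subtype.val hab)⟩⟩
  have hcb : #(ℕ → Bool) = Cardinal.continuum := by
    rw [← Cardinal.power_def, mk_bool, mk_nat, two_power_aleph0]
  rw [hcb, lift_continuum] at hle
  exact hle.trans_eq (lift_id' _)

/-- The span of a set of size `< 𝔠` over `ℚ` has size `< 𝔠`. -/
lemma mk_span_lt {V : Type u} [AddCommGroup V] [Module ℚ V] {s : Set V}
    (h : #s < Cardinal.continuum) : #(span ℚ s) < Cardinal.continuum := by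
  have h1 : #(span ℚ s) ≤ #(s →₀ ℚ) := by
    rw [Finsupp.span_eq_range_linearCombination]
    exact mk_le_of_surjective (LinearMap.surjective_rangeRestrict _)
  rcases isEmpty_or_nonempty s with he | hne
  · haveI : Unique (↥s →₀ ℚ) := Finsupp.uniqueOfLeft
    have : #(s →₀ ℚ) = 1 := mk_eq_one _
    exact (h1.trans_eq this).trans_lt (one_lt_aleph0.trans aleph0_lt_continuum)
  · rw [mk_finsupp_lift_of_infinite', lift_id', Cardinal.mkRat, lift_aleph0] at h1
    exact h1.trans_lt (max_lt h aleph0_lt_continuum)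

/-- A family indexed by a linear order, each of whose members lies outside the span of the
earlier ones, is linearly independent. -/
lemma linearIndependent_of_notMem_span_Iio {ι : Type*} [LinearOrder ι] {V : Type*}
    [AddCommGroup V] [Module ℚ V] {v : ι → V}
    (h : ∀ i, v i ∉ span ℚ (v '' Iio i)) : LinearIndependent ℚ v := by
  rw [linearIndependent_iff]
  intro l hl
  by_contra hne
  have hsup : l.support.Nonempty := Finsupp.support_nonempty_iff.2 hne
  set j := l.support.max' hsup with hj
  have hjs : j ∈ l.support := l.support.max'_mem hsup
  have hlj : l j ≠ 0 := Finsupp.mem_support_iff.1 hjs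
  apply h j
  have hsum : ∑ i ∈ l.support, l i • v i = 0 := by
    rwa [Finsupp.linearCombination_apply, Finsupp.sum] at hl
  have hmem : ∑ i ∈ l.support.erase j, l i • v i ∈ span ℚ (v '' Iio j) := by
    refine sum_mem fun i hi => ?_
    have hij : i < j :=
      lt_of_le_of_ne (Finset.le_max' _ _ (Finset.mem_of_mem_erase hi)) (Finset.ne_of_mem_erase hi)
    exact smul_mem _ _ (subset_span ⟨i, hij, rfl⟩)
  have hjv : l j • v j = -∑ i ∈ l.support.erase j, l i • v i := by
    have := Finset.add_sum_erase l.support (fun i => l i • v i) hjs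
    rw [hsum] at this
    exact eq_neg_of_add_eq_zero_left this
  have hv : v j = (l j)⁻¹ • (l j • v j) := (inv_smul_smul₀ hlj _).symm
  rw [hv, hjv]
  exact smul_mem _ _ (neg_mem hmem)

/-- Transfinite choice of pairs of points from prescribed large sets forming a linearly
independent family. -/
lemma exists_pairs {ι : Type u} [LinearOrder ι] [WellFoundedLT ι]
    (hI : ∀ o : ι, #(Iio o) < Cardinal.continuum)
    (V : Type u) [AddCommGroup V] [Module ℚ V]
    (A : ι → Set V) (hA : ∀ o, Cardinal.continuum ≤ #(A o)) :
    ∃ x y : ι → V,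
      (∀ o, x o ∈ A o) ∧ (∀ o, y o ∈ A o) ∧
      LinearIndependent ℚ (fun j : ι ×ₗ Bool =>
        if (ofLex j).2 then y (ofLex j).1 else x (ofLex j).1) := by
  classical
  have key : ∀ (o : ι) (ih : ∀ o', o' < o → V × V),
      ∃ p : V × V,
        p.1 ∈ A o ∧ p.1 ∉ span ℚ {z | ∃ o', ∃ _h : o' < o, z = (ih o' _h).1 ∨ z = (ih o' _h).2}
        ∧ p.2 ∈ A o ∧
        p.2 ∉ span ℚ
          (insert p.1 {z | ∃ o', ∃ _h : o' < o, z = (ih o' _h).1 ∨ z = (ih o' _h).2}) := by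
    intro o ih
    set M := {z | ∃ o', ∃ _h : o' < o, z = (ih o' _h).1 ∨ z = (ih o' _h).2} with hMdef
    have hM : #M < Cardinal.continuum := by
      have hsub : M ⊆ range (fun q : (Iio o) × Bool =>
          if q.2 then (ih q.1.1 q.1.2).1 else (ih q.1.1 q.1.2).2) := by
        rintro z ⟨o', ho', hz | hz⟩
        · exact ⟨⟨⟨o', ho'⟩, true⟩, hz.symm⟩
        · exact ⟨⟨⟨o', ho'⟩, false⟩, hz.symm⟩
      have h2c : (2 : Cardinal.{u}) < Cardinal.continuum :=
        (nat_lt_aleph0 2).trans_le aleph0_le_continuum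
      calc #M ≤ #(range (fun q : (Iio o) × Bool =>
              if q.2 then (ih q.1.1 q.1.2).1 else (ih q.1.1 q.1.2).2)) := mk_le_mk_of_subset hsub
        _ ≤ #((Iio o) × Bool) := mk_range_le
        _ = #(Iio o) * 2 := by rw [mk_prod, lift_id', mk_bool, lift_two]
        _ < Cardinal.continuum := mul_lt_of_lt aleph0_le_continuum (hI o) h2c
    have hx : ¬ A o ⊆ (span ℚ M : Submodule ℚ V) := fun hsub =>
      absurd (hA o) (not_le.2 ((mk_le_mk_of_subset hsub).trans_lt (BernsteinAux.mk_span_lt hM)))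
    obtain ⟨xx, hxA, hxn⟩ := not_subset.1 hx
    have hM' : #(insert xx M : Set V) < Cardinal.continuum :=
      lt_of_le_of_lt mk_insert_le
        (add_lt_of_lt aleph0_le_continuum hM (one_lt_aleph0.trans aleph0_lt_continuum))
    have hy : ¬ A o ⊆ (span ℚ (insert xx M) : Submodule ℚ V) := fun hsub =>
      absurd (hA o) (not_le.2 ((mk_le_mk_of_subset hsub).trans_lt (BernsteinAux.mk_span_lt hM')))
    obtain ⟨yy, hyA, hyn⟩ := not_subset.1 hy
    exact ⟨(xx, yy), hxA, hxn, hyA, hyn⟩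
  choose F hF1 hF2 hF3 hF4 using key
  let g : ι → V × V := WellFounded.fix wellFounded_lt (fun o ih => F o ih)
  have hg : ∀ o, g o = F o (fun o' _ => g o') := fun o =>
    WellFounded.fix_eq wellFounded_lt (fun o ih => F o ih) o
  let M : ι → Set V := fun o => {z | ∃ o', ∃ _h : o' < o, z = (g o').1 ∨ z = (g o').2}
  have h1 : ∀ o, (g o).1 ∈ A o := fun o => by rw [hg o]; exact hF1 o _
  have h2 : ∀ o, (g o).1 ∉ span ℚ (M o) := fun o => by
    have := hF2 o (fun o' _ => g o'); rwa [← hg o] at this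
  have h3 : ∀ o, (g o).2 ∈ A o := fun o => by rw [hg o]; exact hF3 o _
  have h4 : ∀ o, (g o).2 ∉ span ℚ (insert (g o).1 (M o)) := fun o => by
    have := hF4 o (fun o' _ => g o'); rwa [← hg o] at this
  refine ⟨fun o => (g o).1, fun o => (g o).2, h1, h3, ?_⟩
  apply BernsteinAux.linearIndependent_of_notMem_span_Iio
  intro j
  set w : ι ×ₗ Bool → V :=
    (fun j : ι ×ₗ Bool =>
      if (ofLex j).2 then (fun o => (g o).2) (ofLex j).1
      else (fun o => (g o).1) (ofLex j).1) with hw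
  show w j ∉ span ℚ (w '' Iio j)
  have hsub : ∀ (o : ι), w '' Iio (toLex (o, false)) ⊆ M o := by
    rintro o z ⟨j', hj', rfl⟩
    rcases (Prod.Lex.lt_iff (x := j') (y := toLex (o, false))).1 hj' with hlt | ⟨heq, hlt⟩
    · rcases hb2 : (ofLex j').2 with _ | _ <;> simp only [hw, hb2, if_true, if_false]
      · exact ⟨(ofLex j').1, hlt, Or.inl rfl⟩
      · exact ⟨(ofLex j').1, hlt, Or.inr rfl⟩
    · exact absurd hlt (by simp [Bool.lt_iff])
  have hsub' : ∀ (o : ι), w '' Iio (toLex (o, true)) ⊆ insert ((g o).1) (M o) := by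
    rintro o z ⟨j', hj', rfl⟩
    rcases (Prod.Lex.lt_iff (x := j') (y := toLex (o, true))).1 hj' with hlt | ⟨heq, hlt⟩
    · rcases hb2 : (ofLex j').2 with _ | _ <;> simp only [hw, hb2, if_true, if_false]
      · exact Or.inr ⟨(ofLex j').1, hlt, Or.inl rfl⟩
      · exact Or.inr ⟨(ofLex j').1, hlt, Or.inr rfl⟩
    · have hb2 : (ofLex j').2 = false := by
        rcases hb2 : (ofLex j').2 with _ | _
        · rfl
        · rw [hb2] at hlt; exact absurd hlt (by simp [Bool.lt_iff])
      simp only [hw, hb2, if_false, heq]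
      exact Or.inl rfl
  have hj : j = toLex ((ofLex j).1, (ofLex j).2) := rfl
  rcases hb : (ofLex j).2 with _ | _
  · rw [hj, hb]
    have hwj : w (toLex ((ofLex j).1, false)) = (g (ofLex j).1).1 := by
      simp only [hw]; rfl
    rw [hwj]
    exact fun hmem => h2 _ (span_mono (hsub (ofLex j).1) hmem)
  · rw [hj, hb]
    have hwj : w (toLex ((ofLex j).1, true)) = (g (ofLex j).1).2 := by
      simp only [hw]; rfl
    rw [hwj]
    exact fun hmem => h4 _ (span_mono (hsub' (ofLex j).1) hmem)

/-- Main construction: given a suitable "pattern" `(Q, S, T₀)`, we obtain a Bernstein set in `P`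
whose translates along a set of size `#T₀` partition `P`. -/
theorem main_aux (P : Type u) [NormedAddCommGroup P] [NormedSpace ℝ P] [CompleteSpace P]
    [TopologicalSpace.SeparableSpace P] [Nontrivial P]
    (Q : Type u) [AddCommGroup Q] [Module ℚ Q] (S T₀ : Set Q)
    (hQcard : #Q ≤ Cardinal.continuum) (h0S : (0 : Q) ∈ S)
    (hspan : span ℚ (Sᶜ) = (⊤ : Submodule ℚ Q)) (hSne : Sᶜ.Nonempty)
    (hpart : ∀ q : Q, ∃! a, a ∈ T₀ ∧ q - a ∈ S) :
    ∃ (B T : Set P), IsBernstein B ∧ #T = #T₀ ∧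
      T.PairwiseDisjoint (fun t => (fun x => t + x) '' B) ∧
      (⋃ t ∈ T, (fun x => t + x) '' B) = Set.univ := by
  classical
  letI : Module ℚ P := Module.compHom P (algebraMap ℚ ℝ)
  haveI : SecondCountableTopology P := UniformSpace.secondCountable_of_separable P
  set ι := (Cardinal.continuum.{u}).ord.ToType with hι
  -- a surjection from `ι` onto Cantor sets (plus `univ`)
  haveI : Nonempty {C : Set P // IsCantorSet C ∨ C = Set.univ} := ⟨⟨Set.univ, Or.inr rfl⟩⟩
  have hβ : #{C : Set P // IsCantorSet C ∨ C = Set.univ} ≤ #ι := by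
    have h1 : #{C : Set P // IsCantorSet C ∨ C = Set.univ} ≤ #{C : Set P // IsClosed C} := by
      refine mk_le_of_injective (f := fun C => ⟨C.1, ?_⟩) ?_
      · rcases C.2 with h | h
        · exact h.2.1.isClosed
        · rw [h]; exact isClosed_univ
      · intro C D h
        have h2 := congrArg Subtype.val h
        exact Subtype.ext h2
    rw [hι, mk_ord_toType]
    exact h1.trans (mk_closeds_le_continuum P)
  obtain ⟨emb⟩ := Cardinal.le_def _ _ |>.1 hβ
  set e : ι → {C : Set P // IsCantorSet C ∨ C = Set.univ} := invFun emb with he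
  have hesurj : Surjective e := invFun_surjective emb.injective
  set A : ι → Set P := fun o => (e o).1 with hA
  have hAc : ∀ o, Cardinal.continuum ≤ #(A o) := by
    intro o
    rcases (e o).2 with h | h
    · exact continuum_le_mk_of_isCantorSet h
    · show Cardinal.continuum ≤ #(A o)
      rw [show A o = Set.univ from h, mk_univ]
      exact continuum_le_cardinal_of_module ℝ P
  have hIio : ∀ o : ι, #(Iio o) < Cardinal.continuum := fun o => mk_Iio_ord_toType o
  obtain ⟨x, y, hx, hy, hwli⟩ := exists_pairs hIio P A hAc
  set w : ι ×ₗ Bool → P :=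
    (fun j : ι ×ₗ Bool => if (ofLex j).2 then y (ofLex j).1 else x (ofLex j).1) with hwdef
  have hwinj : Injective w := hwli.injective
  have hws : LinearIndepOn ℚ id (range w) := (linearIndepOn_id_range_iff hwinj).mpr hwli
  set t : Set P := hws.extend (subset_univ (range w)) with ht
  set bas : Module.Basis t ℚ P := Module.Basis.extend hws with hbas
  have hwt : range w ⊆ t := hws.subset_extend _
  have hxw : ∀ o, x o = w (toLex (o, false)) := fun o => rfl
  have hyw : ∀ o, y o = w (toLex (o, true)) := fun o => rfl
  have hyinj : Injective y := by
    intro o o' h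
    have : w (toLex (o, true)) = w (toLex (o', true)) := by rw [← hyw, ← hyw, h]
    have := hwinj this
    exact congrArg (fun p => (ofLex p).1) this
  have hxy : ∀ o o', x o ≠ y o' := by
    intro o o' h
    have : w (toLex (o, false)) = w (toLex (o', true)) := by rw [← hxw, ← hyw, h]
    have := hwinj this
    have : (false : Bool) = true := congrArg (fun p => (ofLex p).2) this
    simp at this
  -- a surjection from `range y` onto `Sᶜ`
  haveI : Nonempty ↥(Sᶜ) := hSne.to_subtype
  have hYc : #(Sᶜ : Set Q) ≤ #(range y) := by
    rw [mk_range_eq y hyinj, hι, mk_ord_toType]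
    exact (mk_le_mk_of_subset (subset_univ _)).trans (le_of_eq mk_univ |>.trans hQcard)
  obtain ⟨embf⟩ := Cardinal.le_def _ _ |>.1 hYc
  set f : ↥(range y) → ↥(Sᶜ) := invFun embf with hf
  have hfsurj : Surjective f := invFun_surjective embf.injective
  -- the linear map φ
  set val : t → Q := fun z => if h : (z : P) ∈ range y then (f ⟨z, h⟩ : Q) else 0 with hval
  set φ : P →ₗ[ℚ] Q := bas.constr ℕ val with hφ
  have hφt : ∀ (z : P) (hz : z ∈ t), φ z = val ⟨z, hz⟩ := by
    intro z hz
    have h1 := bas.constr_basis ℕ val ⟨z, hz⟩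
    have h2 : bas ⟨z, hz⟩ = z := Module.Basis.extend_apply_self hws ⟨z, hz⟩
    rw [h2] at h1
    exact h1
  have hφx : ∀ o, φ (x o) = 0 := by
    intro o
    have hxt : x o ∈ t := hwt ⟨toLex (o, false), (hxw o).symm⟩
    rw [hφt _ hxt]
    have hnot : (x o : P) ∉ range y := by
      rintro ⟨o', ho'⟩
      exact hxy o o' ho'.symm
    simp only [hval, dif_neg hnot]
  have hφy : ∀ o, φ (y o) ∈ Sᶜ := by
    intro o
    have hyt : y o ∈ t := hwt ⟨toLex (o, true), (hyw o).symm⟩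
    rw [hφt _ hyt]
    have hyr : y o ∈ range y := mem_range_self o
    simp only [hval, dif_pos hyr]
    exact (f ⟨y o, hyr⟩).2
  have hφsurj : Surjective φ := by
    rw [← LinearMap.range_eq_top, ← top_le_iff, ← hspan, span_le]
    intro q hq
    obtain ⟨z, hz⟩ := hfsurj ⟨q, hq⟩
    have hzy : (z : P) ∈ range y := z.2
    have hzt : (z : P) ∈ t := hwt (by
      obtain ⟨o, ho⟩ := hzy
      exact ⟨toLex (o, true), by rw [← hyw]; exact ho⟩)
    refine ⟨(z : P), ?_⟩
    rw [hφt _ hzt]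
    simp only [hval, dif_pos hzy]
    have : (⟨(z : P), hzy⟩ : ↥(range y)) = z := Subtype.ext rfl
    rw [this, hz]
  -- the Bernstein set and the translating set
  set B : Set P := φ ⁻¹' S with hB
  set σ : Q → P := surjInv hφsurj with hσdef
  have hσ : ∀ q, φ (σ q) = q := fun q => surjInv_eq hφsurj q
  have hσinj : Injective σ := injective_surjInv hφsurj
  refine ⟨B, σ '' T₀, ?_, mk_image_eq hσinj, ?_, ?_⟩
  · -- Bernstein
    intro C hC
    obtain ⟨o, ho⟩ := hesurj ⟨C, Or.inl hC⟩
    have hAo : A o = C := congrArg Subtype.val ho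
    constructor
    · intro hsubB
      have hyC : y o ∈ C := hAo ▸ hy o
      exact hφy o (hsubB hyC)
    · intro hsubB
      have hxC : x o ∈ C := hAo ▸ hx o
      have : x o ∈ Bᶜ := hsubB hxC
      exact this (by rw [hB, mem_preimage, hφx o]; exact h0S)
  · -- pairwise disjoint
    rintro t1 ⟨a, ha, rfl⟩ t2 ⟨b, hb, rfl⟩ hne
    have hab : a ≠ b := fun h => hne (by rw [h])
    refine Set.disjoint_left.2 ?_
    rintro z ⟨p, hp, rfl⟩ ⟨p', hp', heq⟩
    obtain ⟨c, -, hcuniq⟩ := hpart (φ (σ a + p))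
    have h1 : a = c := hcuniq a ⟨ha, by rw [map_add, hσ, add_sub_cancel_left]; exact hp⟩
    have h2 : b = c := by
      refine hcuniq b ⟨hb, ?_⟩
      rw [show σ a + p = σ b + p' from heq.symm, map_add, hσ, add_sub_cancel_left]
      exact hp'
    exact hab (h1.trans h2.symm)
  · -- covering
    ext z
    simp only [mem_iUnion, mem_univ, iff_true]
    obtain ⟨a, ⟨haT, haS⟩, -⟩ := hpart (φ z)
    refine ⟨σ a, ⟨a, haT, rfl⟩, z - σ a, ?_, by show σ a + (z - σ a) = z; abel⟩
    rw [hB, mem_preimage, map_sub, hσ]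
    exact haS

theorem main_finite (P : Type u) [NormedAddCommGroup P] [NormedSpace ℝ P] [CompleteSpace P]
    [TopologicalSpace.SeparableSpace P] [Nontrivial P] (n : ℕ) (hn : 2 ≤ n) :
    ∃ (B : Set P) (T : Set P), IsBernstein B ∧ #T = (n : Cardinal) ∧
      T.PairwiseDisjoint (fun t => (fun x => t + x) '' B) ∧
      (⋃ t ∈ T, (fun x => t + x) '' B) = Set.univ := by
  classical
    have hn0 : (0 : ℤ) < (n : ℤ) := by exact_mod_cast Nat.lt_of_lt_of_le (by norm_num) hn
    have hn1 : (1 : ℤ) < (n : ℤ) := by exact_mod_cast Nat.lt_of_lt_of_le (by norm_num) hn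
    set S : Set (ULift.{u} ℚ) := {q | ⌊q.down⌋ % (n : ℤ) = 0} with hS
    set T₀ : Set (ULift.{u} ℚ) := (fun i : ℕ => (ULift.up : ℚ → ULift.{u} ℚ) (i : ℚ)) '' (Iio n) with hT₀
    have hup_inj : Injective (fun i : ℕ => ((ULift.up : ℚ → ULift.{u} ℚ) (i : ℚ) : ULift.{u} ℚ)) := by
      intro i j h
      have : (i : ℚ) = j := congrArg ULift.down h
      exact_mod_cast this
    have h1 : #(ULift.{u} ℚ) ≤ Cardinal.continuum := mk_le_aleph0.trans aleph0_le_continuum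
    have h0S : (0 : ULift.{u} ℚ) ∈ S := by
      show ⌊(0 : ULift.{u} ℚ).down⌋ % (n : ℤ) = 0
      have : (0 : ULift.{u} ℚ).down = (0 : ℚ) := rfl
      rw [this]
      simp
    have h1mem : ((ULift.up : ℚ → ULift.{u} ℚ) (1 : ℚ) : ULift.{u} ℚ) ∈ Sᶜ := by
      show ¬(⌊((ULift.up : ℚ → ULift.{u} ℚ) (1:ℚ)).down⌋ % (n : ℤ) = 0)
      have : ((ULift.up : ℚ → ULift.{u} ℚ) (1:ℚ)).down = (1 : ℚ) := rfl
      rw [this, Int.floor_one, Int.emod_eq_of_lt (by norm_num) hn1]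
      norm_num
    have hspan : span ℚ (Sᶜ) = (⊤ : Submodule ℚ (ULift.{u} ℚ)) := by
      rw [eq_top_iff]
      rintro v -
      by_cases hv : v ∈ Sᶜ
      · exact subset_span hv
      · have hv0 : ⌊v.down⌋ % (n : ℤ) = 0 := not_not.1 hv
        have h2mem : ((ULift.up : ℚ → ULift.{u} ℚ) (v.down + 1) : ULift.{u} ℚ) ∈ Sᶜ := by
          show ¬(⌊((ULift.up : ℚ → ULift.{u} ℚ) (v.down + 1)).down⌋ % (n : ℤ) = 0)
          have hd : ((ULift.up : ℚ → ULift.{u} ℚ) (v.down + 1)).down = v.down + 1 := rfl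
          rw [hd, Int.floor_add_one]
          intro hbad
          have d1 : (n : ℤ) ∣ ⌊v.down⌋ := Int.dvd_of_emod_eq_zero hv0
          have d2 : (n : ℤ) ∣ ⌊v.down⌋ + 1 := Int.dvd_of_emod_eq_zero hbad
          have d3 : (n : ℤ) ∣ 1 := by
            have := dvd_sub d2 d1
            simpa using this
          have := Int.le_of_dvd one_pos d3
          omega
        have hveq : v = (ULift.up : ℚ → ULift.{u} ℚ) (v.down + 1) - (ULift.up : ℚ → ULift.{u} ℚ) 1 := by
          apply ULift.down_injective
          show v.down = v.down + 1 - 1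
          ring
        rw [hveq]
        exact sub_mem (subset_span h2mem) (subset_span h1mem)
    have hpart : ∀ q : ULift.{u} ℚ, ∃! a, a ∈ T₀ ∧ q - a ∈ S := by
      intro q
      have hr0 : 0 ≤ ⌊q.down⌋ % (n : ℤ) := Int.emod_nonneg _ (by omega)
      have hrn : ⌊q.down⌋ % (n : ℤ) < n := Int.emod_lt_of_pos _ hn0
      have hdowncast : ∀ j : ℕ, (q - (ULift.up : ℚ → ULift.{u} ℚ) (j : ℚ)).down = q.down - (j : ℚ) := fun j => rfl
      have hfloor : ∀ j : ℕ, ⌊q.down - (j : ℚ)⌋ = ⌊q.down⌋ - (j : ℤ) := by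
        intro j
        have : (j : ℚ) = ((j : ℤ) : ℚ) := by push_cast; ring
        rw [this, Int.floor_sub_intCast]
      refine ⟨(ULift.up : ℚ → ULift.{u} ℚ) (((⌊q.down⌋ % (n : ℤ)).toNat : ℕ) : ℚ), ⟨⟨(⌊q.down⌋ % (n : ℤ)).toNat, by
        show (⌊q.down⌋ % (n : ℤ)).toNat < n
        omega, rfl⟩, ?_⟩, ?_⟩
      · show ⌊(q - (ULift.up : ℚ → ULift.{u} ℚ) (((⌊q.down⌋ % (n : ℤ)).toNat : ℕ) : ℚ)).down⌋ % (n : ℤ) = 0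
        rw [hdowncast, hfloor, Int.toNat_of_nonneg hr0, Int.sub_emod,
          Int.emod_emod_of_dvd _ dvd_rfl, sub_self, Int.zero_emod]
      · rintro a ⟨⟨j, hj, rfl⟩, haS⟩
        have haS' : ⌊(q - (ULift.up : ℚ → ULift.{u} ℚ) ((j : ℕ) : ℚ)).down⌋ % (n : ℤ) = 0 := haS
        rw [hdowncast, hfloor] at haS'
        have hjn : j < n := hj
        have heq : ⌊q.down⌋ % (n : ℤ) = (j : ℤ) := by
          have h' : ⌊q.down⌋ % (n : ℤ) = (j : ℤ) % (n : ℤ) :=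
            Int.emod_eq_emod_iff_emod_sub_eq_zero.2 haS'
          have h'' : (j : ℤ) % (n : ℤ) = (j : ℤ) :=
            Int.emod_eq_of_lt (Int.natCast_nonneg j) (by exact_mod_cast hjn)
          rw [h''] at h'
          exact h'
        have hj' : j = (⌊q.down⌋ % (n : ℤ)).toNat := by
          rw [heq, Int.toNat_natCast]
        rw [hj']
    obtain ⟨B, T, hB, hT, hd, hcov⟩ :=
      BernsteinAux.main_aux P (ULift.{u} ℚ) S T₀ h1 h0S hspan ⟨_, h1mem⟩ hpart
    refine ⟨B, T, hB, ?_, hd, hcov⟩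
    have e : (Iio n : Set ℕ) ≃ Fin n :=
      ⟨fun x => ⟨x.1, x.2⟩, fun i => ⟨i.1, i.2⟩, fun x => rfl, fun i => rfl⟩
    have himg := mk_image_eq_of_injOn_lift
      (fun i : ℕ => ((ULift.up : ℚ → ULift.{u} ℚ) (i : ℚ) : ULift.{u} ℚ)) (Iio n) hup_inj.injOn
    rw [lift_id', mk_congr e, mk_fin, lift_natCast] at himg
    rw [hT, hT₀, himg]


theorem main_infinite (P : Type u) [NormedAddCommGroup P] [NormedSpace ℝ P] [CompleteSpace P]
    [TopologicalSpace.SeparableSpace P] [Nontrivial P] (κ : Cardinal.{u}) (hinf : ℵ₀ ≤ κ)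
    (hc : κ ≤ Cardinal.continuum) :
    ∃ (B : Set P) (T : Set P), IsBernstein B ∧ #T = κ ∧
      T.PairwiseDisjoint (fun t => (fun x => t + x) '' B) ∧
      (⋃ t ∈ T, (fun x => t + x) '' B) = Set.univ := by
  classical
    haveI : Infinite κ.out := Cardinal.infinite_iff.2 (by rwa [mk_out])
    have hQκ : #(κ.out →₀ ℚ) = κ := by
      rw [mk_finsupp_lift_of_infinite, lift_id', Cardinal.mkRat, lift_aleph0, mk_out,
        max_eq_left hinf]
    have h1 : #(κ.out →₀ ℚ) ≤ Cardinal.continuum := hQκ.le.trans hc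
    have hspan : span ℚ (({0} : Set (κ.out →₀ ℚ))ᶜ) = (⊤ : Submodule ℚ (κ.out →₀ ℚ)) := by
      rw [eq_top_iff]
      rintro v -
      by_cases hv : v = 0
      · rw [hv]; exact zero_mem _
      · exact subset_span (by simpa using hv)
    have hSne : (({0} : Set (κ.out →₀ ℚ))ᶜ).Nonempty := by
      refine ⟨Finsupp.single (Classical.arbitrary κ.out) 1, ?_⟩
      simp [Finsupp.single_eq_zero]
    have hpart : ∀ q : κ.out →₀ ℚ, ∃! a, a ∈ (univ : Set (κ.out →₀ ℚ)) ∧ q - a ∈ ({0} : Set _) := by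
      intro q
      refine ⟨q, ⟨mem_univ q, by simp⟩, ?_⟩
      rintro b ⟨-, hb⟩
      have : q - b = 0 := hb
      exact (sub_eq_zero.1 this).symm
    obtain ⟨B, T, hB, hT, hd, hcov⟩ :=
      BernsteinAux.main_aux P (κ.out →₀ ℚ) ({0} : Set _) univ h1 rfl hspan hSne hpart
    refine ⟨B, T, hB, ?_, hd, hcov⟩
    rw [hT, mk_univ, hQκ]


end BernsteinAux

theorem banach_partition_into_translates_of_bernstein_set
    (P : Type*) [NormedAddCommGroup P] [NormedSpace ℝ P] [CompleteSpace P]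
    [TopologicalSpace.SeparableSpace P] [Nontrivial P]
    (κ : Cardinal) (h2 : 2 ≤ κ) (hc : κ ≤ Cardinal.continuum) :
    ∃ (B : Set P) (T : Set P), IsBernstein B ∧ Cardinal.mk T = κ ∧
      T.PairwiseDisjoint (fun t => (fun x => t + x) '' B) ∧
      (⋃ t ∈ T, (fun x => t + x) '' B) = Set.univ := by
  rcases lt_or_ge κ ℵ₀ with hfin | hinf
  · obtain ⟨n, rfl⟩ := Cardinal.lt_aleph0.1 hfin
    have hn : 2 ≤ n := by exact_mod_cast h2
    exact BernsteinAux.main_finite P n hn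
  · exact BernsteinAux.main_infinite P κ hinf hc
end

section
/- If P is an uncountable Polish space and 2 ≤ κ ≤ 2^ℵ₀ is a cardinal, then P can be partitioned into exactly κ Bernstein sets B such that no member B of the partition is homeomorphic to a subspace of P \ B. -/
open Cardinal Filter Set Function TopologicalSpace

universe u

abbrev Om : Type u := (Cardinal.continuum.{u}).ord.ToType

lemma mk_Om : #(Om.{u}) = Cardinal.continuum.{u} := Cardinal.mk_ord_toType _

lemma mk_Iio_Om (o : Om.{u}) : #(Set.Iio o) < Cardinal.continuum.{u} :=
  Cardinal.mk_Iio_ord_toType o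


open Classical in
noncomputable def Gfun {P : Type u} [TopologicalSpace P] (v : ℕ → P × P) (x : P) : P :=
  if h : ∃ y, Filter.map (fun n => (v n).2) (Filter.comap (fun n => (v n).1) (nhds x)) ≤ nhds y
      ∧ (Filter.comap (fun n => (v n).1) (nhds x)).NeBot
  then h.choose else x

lemma Gfun_eq {P : Type u} [TopologicalSpace P] [T2Space P] {B : Set P} {f : ↥B → P} (hf : Continuous f) {d : ℕ → ↥B}
    (hd : DenseRange d) {x : P} (hx : x ∈ B) :
    Gfun (fun n => ((d n : P), f (d n))) x = f ⟨x, hx⟩ := by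
  have hc : Filter.comap (fun n => ((d n : P))) (nhds x) = Filter.comap d (nhds ⟨x, hx⟩) := by
    rw [nhds_subtype, Filter.comap_comap]; rfl
  have hne : (Filter.comap (fun n => ((d n : P))) (nhds x)).NeBot := by
    rw [hc]
    refine Filter.comap_neBot fun t ht => ?_
    have h1 : (⟨x, hx⟩ : ↥B) ∈ closure (Set.range d) := hd ⟨x, hx⟩
    obtain ⟨y, hy1, n, rfl⟩ := mem_closure_iff_nhds.mp h1 t ht
    exact ⟨n, hy1⟩
  have hten : Filter.Tendsto (fun n => f (d n)) (Filter.comap (fun n => ((d n : P))) (nhds x))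
      (nhds (f ⟨x, hx⟩)) := by
    rw [hc]; exact (hf.tendsto _).comp tendsto_comap
  have hex : ∃ y, Filter.map (fun n => f (d n)) (Filter.comap (fun n => ((d n : P))) (nhds x)) ≤ nhds y
      ∧ (Filter.comap (fun n => ((d n : P))) (nhds x)).NeBot := ⟨f ⟨x, hx⟩, hten, hne⟩
  have := hex.choose_spec
  have h2 : Filter.Tendsto (fun n => f (d n)) (Filter.comap (fun n => ((d n : P))) (nhds x))
      (nhds hex.choose) := this.1
  haveI := this.2
  simp only [Gfun]
  rw [dif_pos hex]
  exact tendsto_nhds_unique h2 hten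

section PolishLemmas
variable {P : Type u} [TopologicalSpace P] [PolishSpace P]

lemma polishCard [Uncountable P] : #P = Cardinal.continuum := by
  letI := borel P
  haveI : BorelSpace P := ⟨rfl⟩
  have e := (PolishSpace.measurableEquivNatBoolOfNotCountable
    (α := P) (by exact fun h => not_countable h)).toEquiv
  have h1 : Cardinal.lift.{0} #P = Cardinal.lift.{u} #(ℕ → Bool) :=
    Cardinal.lift_mk_eq'.mpr ⟨e⟩
  have h2 : #(ℕ → Bool) = Cardinal.continuum := by
    rw [← Cardinal.power_def, Cardinal.mk_bool, Cardinal.mk_nat, Cardinal.two_power_aleph0]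
  simpa [h2, Cardinal.lift_continuum] using h1

lemma cantorCard {C : Set P} (h : IsCantorSet C) : Cardinal.continuum ≤ #C := by
  letI := upgradeIsCompletelyMetrizable P
  obtain ⟨f, hr, -, hinj⟩ := h.2.2.2.exists_nat_bool_injection h.1
  have : Function.Injective (fun x : ℕ → Bool => (⟨f x, hr ⟨x, rfl⟩⟩ : ↥C)) := by
    intro a b hab; exact hinj (congrArg Subtype.val hab)
  have h1 : Cardinal.lift.{u} #(ℕ → Bool) ≤ Cardinal.lift.{0} #(↥C) :=
    Cardinal.lift_mk_le'.mpr ⟨⟨_, this⟩⟩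
  have h2 : #(ℕ → Bool) = Cardinal.continuum := by
    rw [← Cardinal.power_def, Cardinal.mk_bool, Cardinal.mk_nat, Cardinal.two_power_aleph0]
  rw [h2, Cardinal.lift_continuum] at h1
  simpa [Cardinal.lift_uzero] using h1

noncomputable def cantorSeq (C : {C : Set P // IsCantorSet C}) : ℕ → P :=
  haveI : Nonempty ↥C.1 := C.2.1.to_subtype
  fun n => (TopologicalSpace.denseSeq ↥C.1 n : P)

lemma cantorSeq_closure (C : {C : Set P // IsCantorSet C}) :
    closure (Set.range (cantorSeq C)) = C.1 := by
  haveI : Nonempty ↥C.1 := C.2.1.to_subtype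
  apply subset_antisymm
  · refine closure_minimal ?_ C.2.2.2.2.closed
    rintro x ⟨n, rfl⟩; exact (TopologicalSpace.denseSeq ↥C.1 n).2
  · intro x hx
    have h1 : (⟨x, hx⟩ : ↥C.1) ∈ closure (Set.range (TopologicalSpace.denseSeq ↥C.1)) :=
      TopologicalSpace.denseRange_denseSeq ↥C.1 ⟨x, hx⟩
    have h2 := closure_subtype.mp h1
    have : Subtype.val '' (Set.range (TopologicalSpace.denseSeq ↥C.1)) = Set.range (cantorSeq C) := by
      rw [← Set.range_comp]; rfl
    rwa [this] at h2

lemma cantorSeq_inj : Function.Injective (cantorSeq (P := P)) := by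
  intro C1 C2 h
  ext1
  rw [← cantorSeq_closure C1, ← cantorSeq_closure C2, h]

lemma cantor_count (hP : #P ≤ Cardinal.continuum) :
    #{C : Set P // IsCantorSet C} ≤ Cardinal.continuum := by
  refine (Cardinal.mk_le_of_injective cantorSeq_inj).trans ?_
  rw [Cardinal.mk_arrow]
  calc (Cardinal.lift.{0} #P) ^ (Cardinal.lift.{u} #ℕ)
      ≤ Cardinal.continuum ^ (ℵ₀ : Cardinal.{u}) := by
        rw [Cardinal.mk_nat, Cardinal.lift_aleph0, Cardinal.lift_uzero]
        exact Cardinal.power_le_power_right hP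
    _ = Cardinal.continuum := Cardinal.continuum_power_aleph0

lemma funIndexCard (hP : #P ≤ Cardinal.continuum) :
    #(ℕ → P × P) ≤ Cardinal.continuum := by
  rw [Cardinal.mk_arrow]
  calc (Cardinal.lift.{0} #(P × P)) ^ (Cardinal.lift.{u} #ℕ)
      ≤ Cardinal.continuum ^ (ℵ₀ : Cardinal.{u}) := by
        rw [Cardinal.mk_nat, Cardinal.lift_aleph0, Cardinal.lift_uzero]
        refine Cardinal.power_le_power_right ?_
        rw [Cardinal.mk_prod, Cardinal.lift_id]
        calc #P * #P ≤ Cardinal.continuum * Cardinal.continuum := mul_le_mul' hP hP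
          _ = Cardinal.continuum := Cardinal.continuum_mul_self
    _ = Cardinal.continuum := Cardinal.continuum_power_aleph0

section Construction

variable {P K : Type u} [TopologicalSpace P]

def freshAt (prev : Set (P × K)) (x : P) : Prop := ∀ k, (x, k) ∉ prev

abbrev BTask (P K : Type u) [TopologicalSpace P] : Type u :=
  ({C : Set P // IsCantorSet C} × K) ⊕ (((ℕ → P × P) × K) ⊕ (P × K))

def taskColor : BTask P K → K
  | Sum.inl (_, k) => k
  | Sum.inr (Sum.inl (_, k)) => k
  | Sum.inr (Sum.inr (_, k)) => k

open Classical in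
noncomputable def pickSet (t : BTask P K) (prev : Set (P × K)) : Set (P × K) :=
  match t with
  | Sum.inl (C, k) =>
      if h : ∃ x, x ∈ C.1 ∧ freshAt prev x then {(h.choose, k)} else ∅
  | Sum.inr (Sum.inl (v, k)) =>
      if h : ∃ x, Gfun v x ≠ x ∧ freshAt prev x ∧ freshAt prev (Gfun v x)
      then {(h.choose, k), (Gfun v h.choose, k)} else ∅
  | Sum.inr (Sum.inr (_, k)) =>
      if h : ∃ x : P, freshAt prev x then {(h.choose, k)} else ∅

lemma pickSet_card (t : BTask P K) (prev : Set (P × K)) : #(pickSet t prev) ≤ 2 := by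
  have hpair : ∀ a b : P × K, #({a, b} : Set (P × K)) ≤ 2 := by
    intro a b
    refine (Cardinal.mk_union_le {a} {b}).trans ?_
    simp [Cardinal.mk_singleton]
    norm_num
  rcases t with ⟨C, k⟩ | ⟨v, k⟩ | ⟨p, k⟩ <;> simp only [pickSet] <;> split
  · have := hpair (‹∃ x, x ∈ _ ∧ freshAt prev x›.choose, k) (‹∃ x, x ∈ _ ∧ freshAt prev x›.choose, k)
    simpa using this
  · simp
  · apply hpair
  · simp
  · have h := ‹∃ x : P, freshAt prev x›
    have := hpair (h.choose, k) (h.choose, k); simpa using this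
  · simp

noncomputable def stages (e : Om.{u} → BTask P K) : Om.{u} → Set (P × K) :=
  WellFounded.fix (IsWellFounded.wf (α := Om.{u}) (r := (· < ·)))
    (fun o rec => pickSet (e o) (⋃ p : {q : Om.{u} // q < o}, rec p.1 p.2))

def prevs (e : Om.{u} → BTask P K) (o : Om.{u}) : Set (P × K) :=
  ⋃ p : {q : Om.{u} // q < o}, stages e p.1

lemma stages_eq (e : Om.{u} → BTask P K) (o : Om.{u}) :
    stages e o = pickSet (e o) (prevs e o) :=
  WellFounded.fix_eq _ _ _

lemma card_prevs (e : Om.{u} → BTask P K) (o : Om.{u}) :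
    #(prevs e o) < Cardinal.continuum.{u} := by
  have h1 : #(prevs e o) ≤ #{q : Om.{u} // q < o} * ⨆ p : {q : Om.{u} // q < o}, #(stages e p.1) :=
    Cardinal.mk_iUnion_le _
  have h2 : (⨆ p : {q : Om.{u} // q < o}, #(stages e p.1)) ≤ 2 := by
    rcases isEmpty_or_nonempty {q : Om.{u} // q < o} with hE | hNE
    · simp [ciSup_of_empty]
    · exact ciSup_le' fun p => by rw [stages_eq]; exact pickSet_card _ _
  have h3 : #{q : Om.{u} // q < o} < Cardinal.continuum.{u} := mk_Iio_Om o
  calc #(prevs e o) ≤ #{q : Om.{u} // q < o} * 2 :=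
        h1.trans (mul_le_mul_right h2 _)
    _ < Cardinal.continuum.{u} :=
        Cardinal.mul_lt_of_lt Cardinal.aleph0_le_continuum h3
          ((Cardinal.nat_lt_aleph0 2).trans_le Cardinal.aleph0_le_continuum)

lemma pickSet_fresh {t : BTask P K} {prev : Set (P × K)} {x : P} {k : K}
    (h : (x, k) ∈ pickSet t prev) : freshAt prev x := by
  rcases t with ⟨C, k'⟩ | ⟨v, k'⟩ | ⟨p, k'⟩ <;> simp only [pickSet] at h <;> revert h <;> split <;>
      intro h <;> simp only [Set.mem_insert_iff, Set.mem_singleton_iff, Set.mem_empty_iff_false,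
        Prod.mk.injEq] at h
  · rename_i hex; rcases h with ⟨rfl, rfl⟩; exact hex.choose_spec.2
  · rename_i hex
    rcases h with ⟨rfl, rfl⟩ | ⟨rfl, rfl⟩
    · exact hex.choose_spec.2.1
    · exact hex.choose_spec.2.2
  · rename_i hex; rcases h with ⟨rfl, rfl⟩; exact hex.choose_spec

lemma pickSet_color {t : BTask P K} {prev : Set (P × K)} {x : P} {k : K}
    (h : (x, k) ∈ pickSet t prev) : k = taskColor t := by
  rcases t with ⟨C, k'⟩ | ⟨v, k'⟩ | ⟨p, k'⟩ <;> simp only [pickSet] at h <;> revert h <;> split <;>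
      intro h <;> simp only [Set.mem_insert_iff, Set.mem_singleton_iff, Set.mem_empty_iff_false,
        Prod.mk.injEq] at h
  · exact h.2.symm ▸ rfl
  · rcases h with ⟨-, rfl⟩ | ⟨-, rfl⟩ <;> rfl
  · exact h.2.symm ▸ rfl

lemma stages_disjoint {e : Om.{u} → BTask P K} {o1 o2 : Om.{u}} (h : o1 < o2) {x : P} {k1 k2 : K}
    (h1 : (x, k1) ∈ stages e o1) (h2 : (x, k2) ∈ stages e o2) : False := by
  have hfresh : freshAt (prevs e o2) x := by
    rw [stages_eq] at h2; exact pickSet_fresh h2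
  exact hfresh k1 (Set.mem_iUnion.mpr ⟨⟨o1, h⟩, h1⟩)

lemma stages_color_unique {e : Om.{u} → BTask P K} {o1 o2 : Om.{u}} {x : P} {k1 k2 : K}
    (h1 : (x, k1) ∈ stages e o1) (h2 : (x, k2) ∈ stages e o2) : k1 = k2 := by
  rcases lt_trichotomy o1 o2 with h | rfl | h
  · exact absurd (stages_disjoint h h1 h2) id
  · rw [stages_eq] at h1 h2
    rw [pickSet_color h1, pickSet_color h2]
  · exact absurd (stages_disjoint h h2 h1) id

open Classical in
noncomputable def colorOf (e : Om.{u} → BTask P K) (k₀ : K) (x : P) : K :=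
  if h : ∃ p : Om.{u} × K, (x, p.2) ∈ stages e p.1 then h.choose.2 else k₀

lemma colorOf_eq {e : Om.{u} → BTask P K} {k₀ : K} {x : P} {k : K} {o : Om.{u}}
    (h : (x, k) ∈ stages e o) : colorOf e k₀ x = k := by
  have hex : ∃ p : Om.{u} × K, (x, p.2) ∈ stages e p.1 := ⟨(o, k), h⟩
  rw [colorOf, dif_pos hex]
  exact stages_color_unique hex.choose_spec h

end Construction

section Helpers
variable {P K : Type u} [TopologicalSpace P]

lemma mem_stage_cantor {e : Om.{u} → BTask P K} {o : Om.{u}}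
    {C : {C : Set P // IsCantorSet C}} {k : K}
    (he : e o = Sum.inl (C, k)) (hpos : ∃ x, x ∈ C.1 ∧ freshAt (prevs e o) x) :
    ∃ x, x ∈ C.1 ∧ (x, k) ∈ stages e o := by
  refine ⟨hpos.choose, hpos.choose_spec.1, ?_⟩
  rw [stages_eq, he]
  simp only [pickSet]
  rw [dif_pos hpos]
  exact Set.mem_singleton _

lemma mem_stage_pad {e : Om.{u} → BTask P K} {o : Om.{u}} {p : P} {k : K}
    (he : e o = Sum.inr (Sum.inr (p, k))) (hpos : ∃ x : P, freshAt (prevs e o) x) :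
    ∃ x, (x, k) ∈ stages e o := by
  refine ⟨hpos.choose, ?_⟩
  rw [stages_eq, he]
  simp only [pickSet]
  rw [dif_pos hpos]
  exact Set.mem_singleton _

lemma mem_stage_fun {e : Om.{u} → BTask P K} {o : Om.{u}} {v : ℕ → P × P} {k : K}
    (he : e o = Sum.inr (Sum.inl (v, k)))
    (hpos : ∃ x, Gfun v x ≠ x ∧ freshAt (prevs e o) x ∧ freshAt (prevs e o) (Gfun v x)) :
    ∃ x, Gfun v x ≠ x ∧ (x, k) ∈ stages e o ∧ (Gfun v x, k) ∈ stages e o := by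
  refine ⟨hpos.choose, hpos.choose_spec.1, ?_, ?_⟩ <;>
    · rw [stages_eq, he]
      simp only [pickSet]
      rw [dif_pos hpos]
      simp

end Helpers

theorem polish_partition_into_kappa_rigid_bernstein_sets
    (P : Type*) [TopologicalSpace P] [PolishSpace P] [Uncountable P]
    (κ : Cardinal) (h2 : 2 ≤ κ) (hc : κ ≤ Cardinal.continuum) :
    ∃ Part : Set (Set P), Cardinal.mk Part = κ ∧ Part.PairwiseDisjoint id ∧
      ⋃₀ Part = Set.univ ∧
      ∀ B ∈ Part, IsBernstein B ∧ ∀ S : Set P, S ⊆ Bᶜ → IsEmpty (↥B ≃ₜ ↥S) := by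
  classical
  set K := κ.out with hKdef
  have hK : #K = κ := Cardinal.mk_out κ
  haveI : Nontrivial K := by
    rw [← Cardinal.one_lt_iff_nontrivial, hK]
    exact lt_of_lt_of_le one_lt_two h2
  obtain ⟨k0, k1, hk01⟩ := exists_pair_ne K
  have hP : #P = Cardinal.continuum := polishCard
  have hKc : #K ≤ Cardinal.continuum := by rw [hK]; exact hc
  -- cardinality of the task type
  have hTle : #(BTask P K) ≤ Cardinal.continuum := by
    have e1 : #({C : Set P // IsCantorSet C} × K) ≤ Cardinal.continuum := by
      rw [Cardinal.mk_prod, Cardinal.lift_id, Cardinal.lift_id]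
      exact (mul_le_mul' (cantor_count hP.le) hKc).trans_eq Cardinal.continuum_mul_self
    have e2 : #(((ℕ → P × P)) × K) ≤ Cardinal.continuum := by
      rw [Cardinal.mk_prod, Cardinal.lift_id, Cardinal.lift_id]
      exact (mul_le_mul' (funIndexCard hP.le) hKc).trans_eq Cardinal.continuum_mul_self
    have e3 : #(P × K) ≤ Cardinal.continuum := by
      rw [Cardinal.mk_prod, Cardinal.lift_id, Cardinal.lift_id]
      exact (mul_le_mul' hP.le hKc).trans_eq Cardinal.continuum_mul_self
    calc #(BTask P K)
        = #({C : Set P // IsCantorSet C} × K) + (#(((ℕ → P × P)) × K) + #(P × K)) := by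
          simp only [Cardinal.mk_sum, Cardinal.lift_id]
      _ ≤ Cardinal.continuum + (Cardinal.continuum + Cardinal.continuum) := by
          exact add_le_add e1 (add_le_add e2 e3)
      _ = Cardinal.continuum := by rw [Cardinal.continuum_add_self, Cardinal.continuum_add_self]
  haveI : Nonempty (Om) := by
    rw [← Cardinal.mk_ne_zero_iff, mk_Om]
    exact Cardinal.continuum_ne_zero
  have hTOm : #(BTask P K) ≤ #(Om) := by rw [mk_Om]; exact hTle
  obtain ⟨j⟩ := Cardinal.le_def _ _ |>.mp hTOm
  set e : Om → BTask P K := Function.invFun j with hedef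
  have he : ∀ t, e (j t) = t := Function.leftInverse_invFun j.injective
  -- fresh points exist in any continuum-sized set at any stage
  have hfresh : ∀ (o : Om) (S : Set P), Cardinal.continuum ≤ #S →
      ∃ x, x ∈ S ∧ freshAt (prevs e o) x := by
    intro o S hS
    by_contra hcon
    push_neg at hcon
    have hmem : ∀ x : ↥S, ∃ k, ((x : P), k) ∈ prevs e o := by
      intro x
      have h1 := hcon x x.2
      simpa [freshAt, not_forall] using h1
    choose g hg using hmem
    have hinj : Function.Injective (fun x : ↥S => (⟨((x : P), g x), hg x⟩ : ↥(prevs e o))) := by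
      intro a b hab
      have h1 : ((a : P), g a) = ((b : P), g b) := congrArg Subtype.val hab
      exact Subtype.ext (congrArg Prod.fst h1)
    have h2 := Cardinal.mk_le_of_injective hinj
    exact absurd (hS.trans h2) (not_le.mpr (card_prevs e o))
  -- the coloring and the pieces
  set c : P → K := colorOf e k0 with hcdef
  set B : K → Set P := fun k => {x | c x = k} with hBdef
  -- every Cantor set meets every piece
  have hmeet : ∀ (C : Set P), IsCantorSet C → ∀ k : K, (C ∩ B k).Nonempty := by
    intro C hC k
    set t : BTask P K := Sum.inl (⟨C, hC⟩, k) with htdef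
    obtain ⟨x, hxC, hxs⟩ := mem_stage_cantor (he t) (hfresh (j t) C (cantorCard hC))
    exact ⟨x, hxC, colorOf_eq hxs⟩
  -- every piece has size continuum
  have hBcard : ∀ k : K, Cardinal.continuum ≤ #(B k) := by
    intro k
    have hψ : ∀ p : P, ∃ x, (x, k) ∈ stages e (j (Sum.inr (Sum.inr (p, k)))) := by
      intro p
      refine mem_stage_pad (he _) ?_
      obtain ⟨x, -, hfr⟩ := hfresh (j (Sum.inr (Sum.inr (p, k)))) Set.univ
        (by rw [Cardinal.mk_univ, hP])
      exact ⟨x, hfr⟩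
    choose ψ hψ' using hψ
    have hψB : ∀ p, ψ p ∈ B k := fun p => colorOf_eq (hψ' p)
    have hinj : Function.Injective (fun p : P => (⟨ψ p, hψB p⟩ : ↥(B k))) := by
      intro p q hpq
      by_contra hne
      have hjne : j (Sum.inr (Sum.inr (p, k))) ≠ j (Sum.inr (Sum.inr (q, k))) := by
        intro h
        exact hne (by simpa using j.injective h)
      have hval : ψ p = ψ q := congrArg Subtype.val hpq
      rcases lt_or_gt_of_ne hjne with h | h
      · exact stages_disjoint h (hψ' p) (hval ▸ hψ' q)
      · exact stages_disjoint h (hψ' q) (hval ▸ hψ' p)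
    calc Cardinal.continuum = #P := hP.symm
      _ ≤ #(B k) := Cardinal.mk_le_of_injective hinj
  have hBne : ∀ k : K, (B k).Nonempty := by
    intro k
    rw [← Set.nonempty_coe_sort, ← Cardinal.mk_ne_zero_iff]
    exact ne_of_gt (lt_of_lt_of_le Cardinal.continuum_pos (hBcard k))
  -- rigidity
  have hrigid : ∀ (k : K) (S : Set P), S ⊆ (B k)ᶜ → IsEmpty (↥(B k) ≃ₜ ↥S) := by
    intro k S hS
    constructor
    intro φ
    set f : ↥(B k) → P := fun b => ((φ b : ↥S) : P) with hfdef
    have hfc : Continuous f := continuous_subtype_val.comp φ.continuous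
    have hfS : ∀ b, f b ∈ S := fun b => (φ b).2
    have hfinj : Function.Injective f := Subtype.val_injective.comp φ.toEquiv.injective
    haveI : Nonempty ↥(B k) := (hBne k).to_subtype
    set d := TopologicalSpace.denseSeq ↥(B k) with hddef
    have hd : DenseRange d := TopologicalSpace.denseRange_denseSeq _
    set v : ℕ → P × P := fun n => ((d n : P), f (d n)) with hvdef
    have hgf : ∀ x (hx : x ∈ B k), Gfun v x = f ⟨x, hx⟩ := fun x hx => Gfun_eq hfc hd hx
    set t : BTask P K := Sum.inr (Sum.inl (v, k)) with htdef
    set o : Om := j t with hodef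
    by_cases hcase : ∃ x, Gfun v x ≠ x ∧ freshAt (prevs e o) x ∧ freshAt (prevs e o) (Gfun v x)
    · obtain ⟨x, hne, hx1, hx2⟩ := mem_stage_fun (he t) hcase
      have hxB : x ∈ B k := colorOf_eq hx1
      have hgB : Gfun v x ∈ B k := colorOf_eq hx2
      have hgS : Gfun v x ∈ S := by rw [hgf x hxB]; exact hfS _
      exact hS hgS hgB
    · push_neg at hcase
      by_cases hfix : ∃ x ∈ B k, Gfun v x = x
      · obtain ⟨x, hx, hfxx⟩ := hfix
        have hxS : x ∈ S := by
          have h1 := hfS (⟨x, hx⟩ : ↥(B k))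
          rw [← hgf x hx, hfxx] at h1
          exact h1
        exact hS hxS hx
      · push_neg at hfix
        set N : Set P := {y | ∃ k', (y, k') ∈ prevs e o} with hNdef
        have hNmem : ∀ y : P, ¬ freshAt (prevs e o) y → y ∈ N := by
          intro y hy
          simpa [freshAt, not_forall, hNdef] using hy
        have hNle : #N ≤ #(prevs e o) := by
          have hinj : Function.Injective (fun y : ↥N =>
              (⟨((y : P), (show ∃ k', ((y : P), k') ∈ prevs e o from y.2).choose),
                (show ∃ k', ((y : P), k') ∈ prevs e o from y.2).choose_spec⟩ : ↥(prevs e o))) := by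
            intro a b hab
            have h1 := congrArg Subtype.val hab
            exact Subtype.ext (congrArg Prod.fst h1)
          exact Cardinal.mk_le_of_injective hinj
        have hNlt : #N < Cardinal.continuum := lt_of_le_of_lt hNle (card_prevs e o)
        have hsub : B k ⊆ N ∪ (B k ∩ Gfun v ⁻¹' N) := by
          intro x hx
          by_cases hfr : freshAt (prevs e o) x
          · right
            refine ⟨hx, hNmem _ (hcase x (hfix x hx) hfr)⟩
          · left
            exact hNmem _ hfr
        have hinjOn : Set.InjOn (Gfun v) (B k) := by
          intro a ha b hb hab
          rw [hgf a ha, hgf b hb] at hab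
          exact congrArg Subtype.val (hfinj hab)
        have h5 : #(B k ∩ Gfun v ⁻¹' N : Set P) ≤ #N := by
          rw [← Cardinal.mk_image_eq_of_injOn (Gfun v) _
            (hinjOn.mono Set.inter_subset_left)]
          refine Cardinal.mk_le_mk_of_subset ?_
          rintro y ⟨x, ⟨-, hxN⟩, rfl⟩
          exact hxN
        have h6 : #(B k) < Cardinal.continuum := by
          calc #(B k) ≤ #(N ∪ (B k ∩ Gfun v ⁻¹' N) : Set P) := Cardinal.mk_le_mk_of_subset hsub
            _ ≤ #N + #(B k ∩ Gfun v ⁻¹' N : Set P) := Cardinal.mk_union_le _ _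
            _ ≤ #N + #N := add_le_add le_rfl h5
            _ < Cardinal.continuum := Cardinal.add_lt_of_lt Cardinal.aleph0_le_continuum hNlt hNlt
        exact absurd (hBcard k) (not_le.mpr h6)
  -- injectivity of the pieces
  have hBinj : Function.Injective B := by
    intro a b hab
    obtain ⟨x, hx⟩ := hBne a
    have hxb : x ∈ B b := hab ▸ hx
    have h1 : c x = a := hx
    have h2 : c x = b := hxb
    rw [← h1, ← h2]
  -- assemble
  refine ⟨Set.range B, ?_, ?_, ?_, ?_⟩
  · rw [Cardinal.mk_range_eq B hBinj, hK]
  · rintro s ⟨a, rfl⟩ u ⟨b, rfl⟩ hab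
    have hab' : a ≠ b := fun h => hab (by rw [h])
    simp only [Function.onFun, id]
    refine Set.disjoint_left.mpr ?_
    intro x hxa hxb
    exact hab' ((show c x = a from hxa).symm.trans (show c x = b from hxb))
  · rw [Set.sUnion_eq_univ_iff]
    intro x
    exact ⟨B (c x), Set.mem_range_self _, rfl⟩
  · rintro Bs ⟨k, rfl⟩
    refine ⟨?_, hrigid k⟩
    intro C hC
    constructor
    · intro hsub
      obtain ⟨k', hk'⟩ := exists_ne k
      obtain ⟨x, hxC, hxk'⟩ := hmeet C hC k'
      have hxk : x ∈ B k := hsub hxC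
      exact hk' ((show c x = k' from hxk').symm.trans (show c x = k from hxk))
    · intro hsub
      obtain ⟨x, hxC, hxk⟩ := hmeet C hC k
      exact hsub hxC hxk
end PolishLemmas
end

section
/- If P is a Polish space that is also a vector space over ℚ (or over a field of size 2) in which all translations are homeomorphisms, then there exist two disjoint Bernstein sets R, S ⊆ P such that R ∪ S is linearly independent over the base field. -/
open Cardinal Set Submodule

universe u v

theorem exists_wf_pair_choice {ι : Type*} {α : Type*} (r : ι → ι → Prop) (hwf : WellFounded r)
    (Q : ι → Set α → α × α → Prop)
    (hQ : ∀ i (prev : Set α), ∃ p, Q i prev p) :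
    ∃ g : ι → α × α, ∀ i, Q i (⋃ j, ⋃ _ : r j i, {(g j).1, (g j).2}) (g i) := by
  let F : ∀ i : ι, (∀ j, r j i → α × α) → α × α := fun i rec =>
    (hQ i (⋃ j, ⋃ h : r j i, {(rec j h).1, (rec j h).2})).choose
  refine ⟨hwf.fix F, fun i => ?_⟩
  have h : hwf.fix F i = F i fun j _ => hwf.fix F j := hwf.fix_eq F i
  rw [h]
  exact (hQ i _).choose_spec

theorem mk_span_lt_continuum {P : Type u} {K : Type v} [Field K] [AddCommGroup P] [Module K P]
    [Countable K] {s : Set P} (hs : #s < continuum) :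
    #(Submodule.span K s : Set P) < continuum := by
  have hne : Nonempty K := ⟨1⟩
  obtain ⟨e, he⟩ := exists_surjective_nat K
  set μ := max #s ℵ₀ with hμdef
  have hμinf : ℵ₀ ≤ μ := le_max_right _ _
  have hμlt : μ < continuum := max_lt hs aleph0_lt_continuum
  let D := Σ n : ℕ, (Fin n → ℕ) × (Fin n → s)
  let F : D → P := fun x => ∑ i, e (x.2.1 i) • (x.2.2 i : P)
  have hsub : (Submodule.span K s : Set P) ⊆ Set.range F := by
    intro x hx
    obtain ⟨n, f, g, hfg⟩ := mem_span_set'.mp hx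
    choose c hc using fun i => he (f i)
    refine ⟨⟨n, c, g⟩, ?_⟩
    simpa only [F, hc] using hfg
  have hD : #D ≤ μ := by
    have h1 : ∀ n : ℕ, #((Fin n → ℕ) × (Fin n → s)) ≤ μ := by
      intro n
      rw [Cardinal.mk_prod]
      have ha : Cardinal.lift.{u} #(Fin n → ℕ) ≤ ℵ₀ := by
        simpa using Cardinal.lift_le.{u}.mpr (Cardinal.mk_le_aleph0 (α := Fin n → ℕ))
      have hb : Cardinal.lift.{0} #(Fin n → s) ≤ μ := by
        have : #(Fin n → s) ≤ μ := by
          rw [Cardinal.mk_arrow]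
          simp only [Cardinal.mk_fin, Cardinal.lift_natCast, Cardinal.lift_id, Cardinal.lift_id']
          calc (#s) ^ (n : Cardinal) ≤ μ ^ (n : Cardinal) :=
                Cardinal.power_le_power_right (le_max_left _ _)
            _ ≤ μ := Cardinal.power_nat_le hμinf
        simpa using this
      calc Cardinal.lift.{u} #(Fin n → ℕ) * Cardinal.lift.{0} #(Fin n → s) ≤ ℵ₀ * μ :=
            mul_le_mul' ha hb
        _ = μ := by rw [Cardinal.mul_eq_max le_rfl hμinf, max_eq_right hμinf]
    calc #D = Cardinal.sum (fun n : ℕ => #((Fin n → ℕ) × (Fin n → s))) := Cardinal.mk_sigma _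
      _ ≤ Cardinal.sum (fun _ : ℕ => μ) := Cardinal.sum_le_sum _ _ h1
      _ = Cardinal.lift.{u} #ℕ * Cardinal.lift.{0} μ := Cardinal.sum_const _ _
      _ ≤ μ := by
          simp only [Cardinal.mk_nat, Cardinal.lift_aleph0, Cardinal.lift_id, Cardinal.lift_id']
          rw [Cardinal.mul_eq_max le_rfl hμinf, max_eq_right hμinf]
  exact lt_of_le_of_lt ((mk_le_mk_of_subset hsub).trans (mk_range_le.trans hD)) hμlt

theorem IsCantorSet.continuum_le_mk {P : Type u} [TopologicalSpace P] [PolishSpace P] {C : Set P}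
    (hC : IsCantorSet C) : continuum ≤ #C := by
  letI := TopologicalSpace.upgradeIsCompletelyMetrizable P
  obtain ⟨f, hrange, -, hinj⟩ := hC.2.2.2.exists_nat_bool_injection hC.1
  have h : Nonempty ((ℕ → Bool) ↪ C) :=
    ⟨⟨fun x => ⟨f x, hrange ⟨x, rfl⟩⟩, fun x y hxy => hinj (congrArg Subtype.val hxy)⟩⟩
  have h2 := Cardinal.lift_mk_le'.mpr h
  have h3 : #(ℕ → Bool) = continuum := by
    rw [Cardinal.mk_arrow]
    simp [Cardinal.two_power_aleph0]
  rw [h3, Cardinal.lift_continuum, Cardinal.lift_id'] at h2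
  exact h2

theorem mk_cantorSets_le {P : Type u} [TopologicalSpace P] [PolishSpace P] :
    #{C : Set P // IsCantorSet C} ≤ continuum := by
  letI := TopologicalSpace.upgradeIsCompletelyMetrizable P
  obtain ⟨b, bc, -, hb⟩ := TopologicalSpace.exists_countable_basis P
  haveI : Countable b := bc.to_subtype
  have hG : Function.Injective
      (fun C : {C : Set P // IsCantorSet C} => {s : b | (s : Set P) ⊆ (↑C : Set P)ᶜ}) := by
    intro C D h
    have hCc : IsOpen (↑C : Set P)ᶜ := (C.2.2.1.isClosed).isOpen_compl
    have hDc : IsOpen (↑D : Set P)ᶜ := (D.2.2.1.isClosed).isOpen_compl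
    have e1 := hb.open_eq_sUnion' hCc
    have e2 := hb.open_eq_sUnion' hDc
    have hsets : {s ∈ b | s ⊆ (↑C : Set P)ᶜ} = {s ∈ b | s ⊆ (↑D : Set P)ᶜ} := by
      ext s
      constructor
      · rintro ⟨hsb, hsub⟩
        exact ⟨hsb, (Set.ext_iff.mp h ⟨s, hsb⟩).mp hsub⟩
      · rintro ⟨hsb, hsub⟩
        exact ⟨hsb, (Set.ext_iff.mp h ⟨s, hsb⟩).mpr hsub⟩
    have : (↑C : Set P)ᶜ = (↑D : Set P)ᶜ := by rw [e1, e2, hsets]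
    exact Subtype.ext (compl_injective this)
  calc #{C : Set P // IsCantorSet C} ≤ #(Set b) := Cardinal.mk_le_of_injective hG
    _ = 2 ^ #b := Cardinal.mk_set
    _ ≤ 2 ^ ℵ₀ := Cardinal.power_le_power_left two_ne_zero Cardinal.mk_le_aleph0
    _ = continuum := Cardinal.two_power_aleph0

theorem exists_disjoint_bernstein_sets_with_independent_union
    (P : Type*) [TopologicalSpace P] [PolishSpace P]
    (K : Type*) [Field K] [AddCommGroup P] [Module K P]
    (hK : Cardinal.mk K = 2 ∨ Nonempty (K ≃+* ℚ))
    (htrans : ∀ t : P, Continuous fun x => t + x) :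
    ∃ R S : Set P, Disjoint R S ∧ IsBernstein R ∧ IsBernstein S ∧
      LinearIndependent K (Subtype.val : ↥(R ∪ S) → P) := by
  classical
  have hKc : Countable K := by
    rcases hK with h | ⟨e⟩
    · refine Cardinal.mk_le_aleph0_iff.mp ?_
      rw [h]
      exact_mod_cast (Cardinal.nat_lt_aleph0 2).le
    · obtain ⟨e'⟩ := e
      exact Countable.of_equiv ℚ e'.toEquiv.symm
  set ι := {C : Set P // IsCantorSet C} with hιdef
  obtain ⟨emb⟩ : Nonempty (ι ↪ Cardinal.continuum.ord.ToType) := by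
    refine (Cardinal.le_def _ _).mp ?_
    rw [Cardinal.mk_toType, Cardinal.card_ord]
    exact mk_cantorSets_le
  let r : ι → ι → Prop := fun i j => emb i < emb j
  have hwf : WellFounded r := InvImage.wf emb wellFounded_lt
  have htri : ∀ i j : ι, r i j ∨ i = j ∨ r j i := by
    intro i j
    rcases lt_trichotomy (emb i) (emb j) with h | h | h
    · exact Or.inl h
    · exact Or.inr (Or.inl (emb.injective h))
    · exact Or.inr (Or.inr h)
  have htr : ∀ {i j k : ι}, r i j → r j k → r i k := fun h1 h2 => h1.trans h2
  have hseg : ∀ i : ι, #{j : ι // r j i} < Cardinal.continuum := by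
    intro i
    have h1 : #{j : ι // r j i} ≤ #(Set.Iio (emb i)) :=
      Cardinal.mk_le_of_injective (f := fun j => (⟨emb j.1, j.2⟩ : Set.Iio (emb i)))
        (fun j k h => Subtype.ext (emb.injective (congrArg Subtype.val h)))
    exact h1.trans_lt (Cardinal.mk_Iio_ord_toType _)
  have hQ : ∀ (i : ι) (prev : Set P), ∃ p : P × P,
      (#prev < Cardinal.continuum →
        p.1 ∈ (i : Set P) ∧ p.2 ∈ (i : Set P) ∧ p.1 ∉ Submodule.span K prev ∧
          p.2 ∉ Submodule.span K (insert p.1 prev)) := by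
    intro i prev
    by_cases h : #prev < Cardinal.continuum
    · have h1 : #(Submodule.span K prev : Set P) < Cardinal.continuum := mk_span_lt_continuum h
      have hCi : Cardinal.continuum ≤ #(i : Set P) := i.2.continuum_le_mk
      have hns : ¬ ((i : Set P) ⊆ (Submodule.span K prev : Set P)) := fun hsub =>
        ((hCi.trans (Cardinal.mk_le_mk_of_subset hsub)).trans_lt h1).false
      obtain ⟨x, hxC, hxs⟩ := Set.not_subset.mp hns
      have h2 : #(insert x prev : Set P) < Cardinal.continuum :=
        Cardinal.mk_insert_le.trans_lt
          (Cardinal.add_lt_of_lt Cardinal.aleph0_le_continuum h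
            (Cardinal.one_lt_aleph0.trans Cardinal.aleph0_lt_continuum))
      have h3 : #(Submodule.span K (insert x prev) : Set P) < Cardinal.continuum :=
        mk_span_lt_continuum h2
      have hns2 : ¬ ((i : Set P) ⊆ (Submodule.span K (insert x prev) : Set P)) := fun hsub =>
        ((hCi.trans (Cardinal.mk_le_mk_of_subset hsub)).trans_lt h3).false
      obtain ⟨y, hyC, hys⟩ := Set.not_subset.mp hns2
      exact ⟨(x, y), fun _ => ⟨hxC, hyC, hxs, hys⟩⟩
    · exact ⟨(0, 0), fun hc => absurd hc h⟩
  obtain ⟨g, hg⟩ := exists_wf_pair_choice r hwf _ hQ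
  set Prev : ι → Set P := fun i => ⋃ j, ⋃ _ : r j i, ({(g j).1, (g j).2} : Set P) with hPrev
  have hmem : ∀ (x : P) (i : ι), x ∈ Prev i ↔ ∃ j : ι, r j i ∧ (x = (g j).1 ∨ x = (g j).2) := by
    intro x i
    simp only [hPrev, Set.mem_iUnion, Set.mem_insert_iff, Set.mem_singleton_iff]
    constructor
    · rintro ⟨j, hj, h⟩; exact ⟨j, hj, h⟩
    · rintro ⟨j, hj, h⟩; exact ⟨j, hj, h⟩
  have hprevcard : ∀ i : ι, #(Prev i) < Cardinal.continuum := by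
    intro i
    have he : Prev i = ⋃ j : {j : ι // r j i}, ({(g j).1, (g j).2} : Set P) := by
      rw [hPrev, Set.iUnion_subtype]
    rw [he]
    refine lt_of_le_of_lt Cardinal.mk_iUnion_le_sum_mk ?_
    refine lt_of_le_of_lt (Cardinal.sum_le_sum _ (fun _ => 2) ?_) ?_
    · intro j
      refine Cardinal.mk_insert_le.trans ?_
      rw [Cardinal.mk_singleton]
      exact le_of_eq one_add_one_eq_two
    · rw [Cardinal.sum_const']
      exact Cardinal.mul_lt_of_lt Cardinal.aleph0_le_continuum (hseg i)
        (by exact_mod_cast Cardinal.nat_lt_continuum 2)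
  have hkey : ∀ i : ι, (g i).1 ∈ (i : Set P) ∧ (g i).2 ∈ (i : Set P) ∧
      (g i).1 ∉ Submodule.span K (Prev i) ∧
      (g i).2 ∉ Submodule.span K (insert (g i).1 (Prev i)) := fun i => hg i (hprevcard i)
  set A : ι → Set P := fun i => insert (g i).2 (insert (g i).1 (Prev i)) with hA
  have hmemA : ∀ (x : P) (i : ι), x ∈ A i ↔ (x = (g i).2 ∨ x = (g i).1 ∨ x ∈ Prev i) := by
    intro x i
    simp only [hA, Set.mem_insert_iff]
  have hmono : ∀ {j i : ι}, r j i → A j ⊆ Prev i := by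
    intro j i hji x hx
    rcases (hmemA x j).mp hx with rfl | h | h
    · exact (hmem _ i).mpr ⟨j, hji, Or.inr rfl⟩
    · rw [h]; exact (hmem _ i).mpr ⟨j, hji, Or.inl rfl⟩
    · obtain ⟨k, hkj, hk⟩ := (hmem x j).mp h
      exact (hmem x i).mpr ⟨k, htr hkj hji, hk⟩
  have hPrevsubA : ∀ i : ι, Prev i ⊆ A i :=
    fun i => (Set.subset_insert _ _).trans (Set.subset_insert _ _)
  have hAsub : ∀ {j i : ι}, r j i → A j ⊆ A i := fun h => (hmono h).trans (hPrevsubA _)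
  have hne : ∀ i j : ι, (g i).1 ≠ (g j).2 := by
    intro i j
    rcases htri i j with h | h | h
    · intro hEq
      apply (hkey j).2.2.2
      rw [← hEq]
      exact Submodule.subset_span (Set.mem_insert_of_mem _ ((hmem _ j).mpr ⟨i, h, Or.inl rfl⟩))
    · subst h
      intro hEq
      apply (hkey i).2.2.2
      rw [← hEq]
      exact Submodule.subset_span (Set.mem_insert _ _)
    · intro hEq
      apply (hkey i).2.2.1
      rw [hEq]
      exact Submodule.subset_span ((hmem _ i).mpr ⟨j, h, Or.inr rfl⟩)
  have hdirA : Directed (· ⊆ ·) A := by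
    intro i j
    rcases htri i j with h | h | h
    · exact ⟨j, hAsub h, subset_rfl⟩
    · exact ⟨j, (congrArg A h).subset, subset_rfl⟩
    · exact ⟨i, subset_rfl, hAsub h⟩
  have hAli : ∀ i : ι, LinearIndependent K (fun x => x : A i → P) := by
    intro i
    refine hwf.induction (C := fun i => LinearIndependent K (fun x => x : A i → P)) i ?_
    intro i IH
    have hPeq : Prev i = ⋃ j : {j : ι // r j i}, A ↑j := by
      apply Set.Subset.antisymm
      · intro x hx
        obtain ⟨j, hj, hx⟩ := (hmem x i).mp hx
        refine Set.mem_iUnion.mpr ⟨⟨j, hj⟩, ?_⟩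
        refine (hmemA x j).mpr ?_
        rcases hx with h | h
        · exact Or.inr (Or.inl h)
        · exact Or.inl h
      · exact Set.iUnion_subset fun j => hmono j.2
    have hdir : Directed (· ⊆ ·) (fun j : {j : ι // r j i} => A ↑j) := by
      intro j k
      rcases htri ↑j ↑k with h | h | h
      · exact ⟨k, hAsub h, subset_rfl⟩
      · exact ⟨k, (congrArg A h).subset, subset_rfl⟩
      · exact ⟨j, subset_rfl, hAsub h⟩
    have h1 : LinearIndependent K (fun x => x : (Prev i) → P) := by
      rw [hPeq]
      exact linearIndepOn_iUnion_of_directed (v := id) hdir fun j => IH j j.2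
    have h2 := LinearIndepOn.id_insert (s := Prev i) h1 (hkey i).2.2.1
    have h3 := h2.id_insert (hkey i).2.2.2
    exact h3
  refine ⟨Set.range (fun i : ι => (g i).1), Set.range (fun i : ι => (g i).2), ?_, ?_, ?_, ?_⟩
  · rw [Set.disjoint_left]
    rintro x ⟨i, rfl⟩ ⟨j, hj⟩
    exact hne i j hj.symm
  · intro C hC
    constructor
    · intro hsub
      obtain ⟨j, hj⟩ := hsub (hkey ⟨C, hC⟩).2.1
      exact hne j ⟨C, hC⟩ hj
    · intro hsub
      exact hsub (hkey ⟨C, hC⟩).1 ⟨⟨C, hC⟩, rfl⟩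
  · intro C hC
    constructor
    · intro hsub
      obtain ⟨j, hj⟩ := hsub (hkey ⟨C, hC⟩).1
      exact hne ⟨C, hC⟩ j hj.symm
    · intro hsub
      exact hsub (hkey ⟨C, hC⟩).2.1 ⟨⟨C, hC⟩, rfl⟩
  · have hEq : Set.range (fun i : ι => (g i).1) ∪ Set.range (fun i : ι => (g i).2) = ⋃ i, A i := by
      apply Set.Subset.antisymm
      · rintro x (⟨i, rfl⟩ | ⟨i, rfl⟩)
        · exact Set.mem_iUnion.mpr ⟨i, (hmemA _ i).mpr (Or.inr (Or.inl rfl))⟩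
        · exact Set.mem_iUnion.mpr ⟨i, (hmemA _ i).mpr (Or.inl rfl)⟩
      · intro x hx
        obtain ⟨i, hx⟩ := Set.mem_iUnion.mp hx
        rcases (hmemA x i).mp hx with h | h | h
        · exact Or.inr ⟨i, h.symm⟩
        · exact Or.inl ⟨i, h.symm⟩
        · obtain ⟨j, _, h⟩ := (hmem x i).mp h
          rcases h with h | h
          · exact Or.inl ⟨j, h.symm⟩
          · exact Or.inr ⟨j, h.symm⟩
    rw [hEq]
    exact linearIndepOn_iUnion_of_directed (v := id) hdirA hAli
end
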